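/- arXiv:1702.07335 — 3 statements merged into one kernel-verified Lean document; each statement's English description precedes it below -/
import Mathlib

section
/- Let n₁, n₂ : ℕ, let P be a symmetric positive definite real matrix of size (n₁+n₂)×(n₁+n₂), let m ∈ ℝ^{n₁+n₂}, and define f : ℝ^{n₁} × ℝ^{n₂} → ℝ by f(x,y) = exp(−(1/2)·((x,y)−m)ᵀ P ((x,y)−m)). Then there exists a constant C > 0, independent of y, such that for every y ∈ ℝ^{n₂}: sup_{x ∈ ℝ^{n₁}} f(x,y) = C · ∫_{ℝ^{n₁}} f(x,y) dx. -/
open Matrix MeasureTheory Real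


lemma myaux_dot_continuous {n : ℕ} (A : Matrix (Fin n) (Fin n) ℝ) :
    Continuous fun x : Fin n → ℝ => x ⬝ᵥ A *ᵥ x := by
  simp only [dotProduct, Matrix.mulVec]
  exact continuous_finset_sum _ fun i _ => (continuous_apply i).mul
    (continuous_finset_sum _ fun j _ => continuous_const.mul (continuous_apply j))

lemma myaux_lower_bound {n : ℕ} (A : Matrix (Fin n) (Fin n) ℝ) (hA : A.PosDef) :
    ∃ ε : ℝ, 0 < ε ∧ ∀ x : Fin n → ℝ, ε * (x ⬝ᵥ x) ≤ x ⬝ᵥ A *ᵥ x := by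
  rcases Nat.eq_zero_or_pos n with hn | hn
  · refine ⟨1, one_pos, fun x => ?_⟩
    subst hn
    simp [dotProduct]
  · set S : Set (Fin n → ℝ) := {x | x ⬝ᵥ x = 1} with hS
    have hSne : S.Nonempty := by
      refine ⟨fun _ => Real.sqrt ((n : ℝ)⁻¹), ?_⟩
      have hn' : (0:ℝ) < n := by exact_mod_cast hn
      simp only [hS, Set.mem_setOf_eq, dotProduct]
      rw [Finset.sum_const, Finset.card_univ, Fintype.card_fin]
      rw [← Real.sqrt_mul_self (le_of_lt (inv_pos.mpr hn'))] at *
      field_simp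
      rw [nsmul_eq_mul, Real.sq_sqrt (Real.sqrt_nonneg _), one_div, Real.sqrt_inv,
        Real.sqrt_sq hn'.le, mul_inv_cancel₀ hn'.ne']
    have hcont2 : Continuous fun x : Fin n → ℝ => x ⬝ᵥ x := by
      simp only [dotProduct]
      exact continuous_finset_sum _ fun i _ => (continuous_apply i).mul (continuous_apply i)
    have hSclosed : IsClosed S := isClosed_eq hcont2 continuous_const
    have hSsub : S ⊆ Metric.closedBall 0 1 := by
      intro x hx
      rw [Metric.mem_closedBall, dist_zero_right]
      refine pi_norm_le_iff_of_nonneg zero_le_one |>.mpr fun i => ?_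
      rw [Real.norm_eq_abs, abs_le_one_iff_mul_self_le_one]
      calc x i * x i ≤ ∑ j, x j * x j :=
            Finset.single_le_sum (fun j _ => mul_self_nonneg (x j)) (Finset.mem_univ i)
        _ = 1 := hx
    have hScpt : IsCompact S :=
      (isCompact_closedBall 0 1).of_isClosed_subset hSclosed hSsub
    obtain ⟨x₀, hx₀S, hmin⟩ := hScpt.exists_isMinOn hSne (myaux_dot_continuous A).continuousOn
    have hx₀ne : x₀ ≠ 0 := by
      intro h
      rw [hS, Set.mem_setOf_eq, h] at hx₀S
      simp at hx₀S
    have hεpos : 0 < x₀ ⬝ᵥ A *ᵥ x₀ := by simpa using hA.dotProduct_mulVec_pos hx₀ne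
    refine ⟨x₀ ⬝ᵥ A *ᵥ x₀, hεpos, fun x => ?_⟩
    by_cases hx : x = 0
    · simp [hx]
    · have hxx : 0 < x ⬝ᵥ x := by
        obtain ⟨i, hi⟩ := Function.ne_iff.mp hx
        refine Finset.sum_pos' (fun j _ => mul_self_nonneg (x j)) ⟨i, Finset.mem_univ i, ?_⟩
        exact mul_self_pos.mpr (by simpa using hi)
      set r : ℝ := Real.sqrt (x ⬝ᵥ x) with hr
      have hrpos : 0 < r := Real.sqrt_pos.mpr hxx
      set u : Fin n → ℝ := r⁻¹ • x with hu
      have hr2 : r * r = x ⬝ᵥ x := Real.mul_self_sqrt hxx.le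
      have huS : u ∈ S := by
        simp only [hS, Set.mem_setOf_eq, hu, smul_dotProduct, dotProduct_smul,
          smul_eq_mul]
        field_simp
        rw [sq, hr2]
      have hval : u ⬝ᵥ A *ᵥ u = r⁻¹ * r⁻¹ * (x ⬝ᵥ A *ᵥ x) := by
        simp only [hu, smul_dotProduct, Matrix.mulVec_smul, dotProduct_smul,
          smul_eq_mul]
        ring
      have this : x₀ ⬝ᵥ A *ᵥ x₀ ≤ u ⬝ᵥ A *ᵥ u := hmin huS
      rw [hval] at this
      have h2 : (x₀ ⬝ᵥ A *ᵥ x₀) * (r * r) ≤ r⁻¹ * r⁻¹ * (x ⬝ᵥ A *ᵥ x) * (r * r) :=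
        mul_le_mul_of_nonneg_right this (by positivity)
      calc (x₀ ⬝ᵥ A *ᵥ x₀) * (x ⬝ᵥ x) = (x₀ ⬝ᵥ A *ᵥ x₀) * (r * r) := by rw [hr2]
        _ ≤ r⁻¹ * r⁻¹ * (x ⬝ᵥ A *ᵥ x) * (r * r) := h2
        _ = x ⬝ᵥ A *ᵥ x := by field_simp

lemma myaux_integrable {n : ℕ} (A : Matrix (Fin n) (Fin n) ℝ) (hA : A.PosDef) :
    Integrable (fun x : Fin n → ℝ => Real.exp (-(1/2) * (x ⬝ᵥ A *ᵥ x))) := by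
  obtain ⟨ε, hε, hbound⟩ := myaux_lower_bound A hA
  have hmeas : AEStronglyMeasurable
      (fun x : Fin n → ℝ => Real.exp (-(1/2) * (x ⬝ᵥ A *ᵥ x))) volume :=
    (Real.continuous_exp.comp ((continuous_const.mul (myaux_dot_continuous A)))).aestronglyMeasurable
  have hInt : Integrable (fun x : Fin n → ℝ => ∏ i, Real.exp (-(ε/2) * (x i)^2)) := by
    apply Integrable.fintype_prod (f := fun (_ : Fin n) (v : ℝ) => Real.exp (-(ε/2) * v^2))
    intro i
    exact integrable_exp_neg_mul_sq (by positivity)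
  refine hInt.mono hmeas ?_
  filter_upwards with x
  rw [Real.norm_eq_abs, Real.norm_eq_abs, abs_of_pos (Real.exp_pos _),
    abs_of_pos (by positivity)]
  rw [← Real.exp_sum]
  apply Real.exp_le_exp.mpr
  have h1 : ∑ i, -(ε/2) * (x i)^2 = -(ε/2) * (x ⬝ᵥ x) := by
    rw [← Finset.mul_sum]
    congr 1
    simp [dotProduct, pow_two]
  rw [h1]
  nlinarith [hbound x]

lemma myaux_integral_pos {n : ℕ} (A : Matrix (Fin n) (Fin n) ℝ) (hA : A.PosDef) :
    0 < ∫ x : Fin n → ℝ, Real.exp (-(1/2) * (x ⬝ᵥ A *ᵥ x)) := by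
  rw [integral_pos_iff_support_of_nonneg (fun x => (Real.exp_pos _).le) (myaux_integrable A hA)]
  have : Function.support (fun x : Fin n → ℝ => Real.exp (-(1/2) * (x ⬝ᵥ A *ᵥ x))) = Set.univ := by
    ext x; simp [Function.mem_support, (Real.exp_pos _).ne']
  rw [this]
  exact isOpen_univ.measure_pos volume Set.univ_nonempty

lemma myaux_submatrix_posdef {n₁ n₂ : ℕ} (P : Matrix (Fin n₁ ⊕ Fin n₂) (Fin n₁ ⊕ Fin n₂) ℝ)
    (hP : P.PosDef) : (P.submatrix Sum.inl Sum.inl).PosDef := by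
  refine Matrix.PosDef.of_dotProduct_mulVec_pos ?_ fun x hx => ?_
  · ext i j
    simpa using hP.1.apply (Sum.inl i) (Sum.inl j)
  · have hx' : (Sum.elim x 0 : Fin n₁ ⊕ Fin n₂ → ℝ) ≠ 0 := by
      intro h
      apply hx
      funext i
      exact congrFun h (Sum.inl i)
    have := hP.dotProduct_mulVec_pos hx'
    simpa [dotProduct, Matrix.mulVec, Fintype.sum_sum_type] using this

lemma myaux_decomp {n₁ n₂ : ℕ} (P : Matrix (Fin n₁ ⊕ Fin n₂) (Fin n₁ ⊕ Fin n₂) ℝ)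
    (hP : P.PosDef) (m : Fin n₁ ⊕ Fin n₂ → ℝ) (y : Fin n₂ → ℝ) :
    ∃ x₀ : Fin n₁ → ℝ, ∀ x : Fin n₁ → ℝ,
      (Sum.elim x y - m) ⬝ᵥ P *ᵥ (Sum.elim x y - m)
        = (x - x₀) ⬝ᵥ (P.submatrix Sum.inl Sum.inl) *ᵥ (x - x₀)
          + (Sum.elim x₀ y - m) ⬝ᵥ P *ᵥ (Sum.elim x₀ y - m) := by
  classical
  set A : Matrix (Fin n₁) (Fin n₁) ℝ := P.submatrix Sum.inl Sum.inl with hAdef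
  set B : Matrix (Fin n₁) (Fin n₂) ℝ := P.submatrix Sum.inl Sum.inr with hBdef
  have hA : A.PosDef := myaux_submatrix_posdef P hP
  have hAdet : IsUnit A.det := isUnit_iff_ne_zero.mpr hA.det_pos.ne'
  set a : Fin n₁ → ℝ := fun i => m (Sum.inl i) with ha
  set b : Fin n₂ → ℝ := fun j => m (Sum.inr j) with hb
  set w : Fin n₁ → ℝ := B *ᵥ (y - b) with hw
  set x₀ : Fin n₁ → ℝ := a - A⁻¹ *ᵥ w with hx₀
  refine ⟨x₀, fun x => ?_⟩
  -- symmetric dot product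
  have hPt : Pᵀ = P := by
    ext i j
    simpa using hP.1.apply i j
  have hsymm : ∀ u v : Fin n₁ ⊕ Fin n₂ → ℝ, u ⬝ᵥ P *ᵥ v = v ⬝ᵥ P *ᵥ u := by
    intro u v
    rw [Matrix.dotProduct_mulVec, ← Matrix.mulVec_transpose, hPt, dotProduct_comm]
  set z₀ : Fin n₁ ⊕ Fin n₂ → ℝ := Sum.elim x₀ y - m with hz₀
  set d : Fin n₁ → ℝ := x - x₀ with hd
  set w' : Fin n₁ ⊕ Fin n₂ → ℝ := Sum.elim d 0 with hw'
  have hsplit : Sum.elim x y - m = z₀ + w' := by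
    funext k
    cases k with
    | inl i => simp [hz₀, hw', hd]
    | inr j => simp [hz₀, hw']
  -- critical point property
  have hcrit : ∀ i, (P *ᵥ z₀) (Sum.inl i) = 0 := by
    intro i
    have h1 : (P *ᵥ z₀) (Sum.inl i)
        = (A *ᵥ (fun j => z₀ (Sum.inl j))) i + (B *ᵥ (fun j => z₀ (Sum.inr j))) i := by
      simp [Matrix.mulVec, dotProduct, Fintype.sum_sum_type, hAdef, hBdef]
    have h2 : (fun j => z₀ (Sum.inl j)) = -(A⁻¹ *ᵥ w) := by
      funext j
      simp [hz₀, hx₀, Pi.sub_apply, ha]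
    have h3 : (fun j => z₀ (Sum.inr j)) = y - b := by
      funext j
      simp [hz₀, hb]
    rw [h1, h2, h3, Matrix.mulVec_neg, Matrix.mulVec_mulVec, Matrix.mul_nonsing_inv A hAdet,
      Matrix.one_mulVec, ← hw]
    simp
  -- dot products with w'
  have hdotw' : ∀ v : Fin n₁ ⊕ Fin n₂ → ℝ, w' ⬝ᵥ v = ∑ i, d i * v (Sum.inl i) := by
    intro v
    simp [hw', dotProduct, Fintype.sum_sum_type]
  have hcross : w' ⬝ᵥ P *ᵥ z₀ = 0 := by
    rw [hdotw']
    exact Finset.sum_eq_zero fun i _ => by rw [hcrit i, mul_zero]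
  have hquad : w' ⬝ᵥ P *ᵥ w' = d ⬝ᵥ A *ᵥ d := by
    rw [hdotw']
    congr 1
    funext i
    congr 1
    simp [Matrix.mulVec, dotProduct, Fintype.sum_sum_type, hw', hAdef]
  calc (Sum.elim x y - m) ⬝ᵥ P *ᵥ (Sum.elim x y - m)
      = (z₀ + w') ⬝ᵥ P *ᵥ (z₀ + w') := by rw [hsplit]
    _ = z₀ ⬝ᵥ P *ᵥ z₀ + z₀ ⬝ᵥ P *ᵥ w' + (w' ⬝ᵥ P *ᵥ z₀ + w' ⬝ᵥ P *ᵥ w') := by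
        rw [Matrix.mulVec_add, add_dotProduct, dotProduct_add,
          dotProduct_add]
    _ = d ⬝ᵥ A *ᵥ d + z₀ ⬝ᵥ P *ᵥ z₀ := by
        rw [hsymm z₀ w', hcross, hquad]; ring

/-- **Duality lemma (Lemma 1).** For an unnormalized Gaussian
`f(x,y) = exp(-(1/2) ((x,y)-m)ᵀ P ((x,y)-m))` with symmetric positive definite precision `P`,
there is a constant `C > 0`, independent of `y`, such that for every `y`,
`sup_x f(x,y) = C * ∫ x, f(x,y)`. -/
theorem gaussian_max_eq_const_mul_integral (n₁ n₂ : ℕ)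
    (P : Matrix (Fin n₁ ⊕ Fin n₂) (Fin n₁ ⊕ Fin n₂) ℝ) (hP : P.PosDef)
    (m : Fin n₁ ⊕ Fin n₂ → ℝ) :
    ∃ C : ℝ, 0 < C ∧ ∀ y : Fin n₂ → ℝ,
      (⨆ x : Fin n₁ → ℝ,
          Real.exp (-(1/2) * ((Sum.elim x y - m) ⬝ᵥ P *ᵥ (Sum.elim x y - m)))) =
        C * ∫ x : Fin n₁ → ℝ,
          Real.exp (-(1/2) * ((Sum.elim x y - m) ⬝ᵥ P *ᵥ (Sum.elim x y - m))) := by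
  classical
  set A : Matrix (Fin n₁) (Fin n₁) ℝ := P.submatrix Sum.inl Sum.inl with hAdef
  have hA : A.PosDef := myaux_submatrix_posdef P hP
  set I : ℝ := ∫ x : Fin n₁ → ℝ, Real.exp (-(1/2) * (x ⬝ᵥ A *ᵥ x)) with hIdef
  have hIpos : 0 < I := myaux_integral_pos A hA
  refine ⟨I⁻¹, inv_pos.mpr hIpos, fun y => ?_⟩
  obtain ⟨x₀, hdec⟩ := myaux_decomp P hP m y
  set q0 : ℝ := (Sum.elim x₀ y - m) ⬝ᵥ P *ᵥ (Sum.elim x₀ y - m) with hq0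
  set E : ℝ := Real.exp (-(1/2) * q0) with hE
  have hfval : ∀ x : Fin n₁ → ℝ,
      Real.exp (-(1/2) * ((Sum.elim x y - m) ⬝ᵥ P *ᵥ (Sum.elim x y - m)))
        = E * Real.exp (-(1/2) * ((x - x₀) ⬝ᵥ A *ᵥ (x - x₀))) := by
    intro x
    rw [hdec x, hE, ← Real.exp_add]
    ring_nf
    rw [add_comm]
  have hle : ∀ x : Fin n₁ → ℝ,
      Real.exp (-(1/2) * ((Sum.elim x y - m) ⬝ᵥ P *ᵥ (Sum.elim x y - m))) ≤ E := by
    intro x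
    rw [hfval x]
    have h0 : 0 ≤ (x - x₀) ⬝ᵥ A *ᵥ (x - x₀) := by simpa using hA.posSemidef.dotProduct_mulVec_nonneg (x - x₀)
    have h1 : Real.exp (-(1/2) * ((x - x₀) ⬝ᵥ A *ᵥ (x - x₀))) ≤ 1 := by
      rw [Real.exp_le_one_iff]
      nlinarith
    calc E * Real.exp (-(1/2) * ((x - x₀) ⬝ᵥ A *ᵥ (x - x₀))) ≤ E * 1 :=
          mul_le_mul_of_nonneg_left h1 (Real.exp_pos _).le
      _ = E := mul_one E
  have hsup : (⨆ x : Fin n₁ → ℝ,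
      Real.exp (-(1/2) * ((Sum.elim x y - m) ⬝ᵥ P *ᵥ (Sum.elim x y - m)))) = E := by
    apply le_antisymm
    · exact ciSup_le hle
    · have hval : Real.exp (-(1/2) * ((Sum.elim x₀ y - m) ⬝ᵥ P *ᵥ (Sum.elim x₀ y - m))) = E := by
        rw [hfval x₀]
        simp
      have hbdd : BddAbove (Set.range fun x : Fin n₁ → ℝ =>
          Real.exp (-(1/2) * ((Sum.elim x y - m) ⬝ᵥ P *ᵥ (Sum.elim x y - m)))) := by
        refine ⟨E, ?_⟩
        rintro _ ⟨x, rfl⟩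
        exact hle x
      calc E = _ := hval.symm
        _ ≤ _ := le_ciSup hbdd x₀
  have hint : (∫ x : Fin n₁ → ℝ,
      Real.exp (-(1/2) * ((Sum.elim x y - m) ⬝ᵥ P *ᵥ (Sum.elim x y - m)))) = E * I := by
    simp only [hfval]
    rw [integral_const_mul]
    congr 1
    exact integral_sub_right_eq_self (fun u : Fin n₁ → ℝ => Real.exp (-(1/2) * (u ⬝ᵥ A *ᵥ u))) x₀
  rw [hsup, hint, ← mul_assoc, mul_comm I⁻¹ E, mul_assoc, inv_mul_cancel₀ hIpos.ne', mul_one]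
end

section
/- Let n₁, n₂ : ℕ, let P be a symmetric positive definite real matrix of size (n₁+n₂)×(n₁+n₂) written in block form P = [[A, B],[Bᵀ, D]] with A of size n₁×n₁, let m ∈ ℝ^{n₁+n₂}, and define f : ℝ^{n₁} × ℝ^{n₂} → ℝ by f(x,y) = exp(−(1/2)·((x,y)−m)ᵀ P ((x,y)−m)). Then for every y ∈ ℝ^{n₂}: sup_{x ∈ ℝ^{n₁}} f(x,y) = (2π)^{−n₁/2} · (det A)^{1/2} · ∫_{ℝ^{n₁}} f(x,y) dx. (In particular the constant C in the duality lemma equals (2π)^{−n₁/2}(det A)^{1/2}, where A is the x-block of the precision matrix.) -/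
open Matrix MeasureTheory Real

open scoped MatrixOrder in
private lemma gauss_aux {n : ℕ} {A : Matrix (Fin n) (Fin n) ℝ} (hA : A.PosDef) :
    ∫ u : Fin n → ℝ, Real.exp (-(1/2) * (u ⬝ᵥ A *ᵥ u)) =
      Real.sqrt (2 * π) ^ n / Real.sqrt A.det := by
  set S := CFC.sqrt A with hSdef
  have hS : S.PosSemidef := (CFC.sqrt_nonneg A).posSemidef
  have hSS : S * S = A := CFC.sqrt_mul_sqrt_self A hA.posSemidef.nonneg
  have hdetS_nonneg : 0 ≤ S.det := by
    rw [hS.isHermitian.det_eq_prod_eigenvalues]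
    exact Finset.prod_nonneg fun i _ => hS.eigenvalues_nonneg i
  have hdetsq : S.det * S.det = A.det := by rw [← det_mul, hSS]
  have hdetA : 0 < A.det := hA.det_pos
  have hdetS_pos : 0 < S.det := by
    rcases hdetS_nonneg.lt_or_eq with h | h
    · exact h
    · exfalso; rw [← h] at hdetsq; simp at hdetsq; linarith
  have hsqrtA : Real.sqrt A.det = S.det := by
    rw [← hdetsq, Real.sqrt_mul_self hdetS_nonneg]
  have hquad : ∀ u : Fin n → ℝ, u ⬝ᵥ A *ᵥ u = (S *ᵥ u) ⬝ᵥ (S *ᵥ u) := by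
    intro u
    have h1 : A *ᵥ u = S *ᵥ (S *ᵥ u) := by rw [mulVec_mulVec, hSS]
    rw [h1, dotProduct_mulVec, ← mulVec_transpose,
      show Sᵀ = S from hS.isHermitian.eq]
  simp_rw [hquad]
  have hdetL : LinearMap.det (Matrix.toLin' S) = S.det := LinearMap.det_toLin' S
  have hmap : Measure.map (Matrix.toLin' S) volume
      = ENNReal.ofReal |(S.det)⁻¹| • (volume : Measure (Fin n → ℝ)) := by
    rw [Measure.map_linearMap_addHaar_eq_smul_addHaar volume (by rw [hdetL]; exact hdetS_pos.ne')]
    rw [hdetL]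
  have hcont : Continuous fun v : Fin n → ℝ => Real.exp (-(1/2) * (v ⬝ᵥ v)) := by
    simp only [dotProduct]
    fun_prop
  have hchg : ∫ u : Fin n → ℝ, Real.exp (-(1/2) * ((S *ᵥ u) ⬝ᵥ (S *ᵥ u)))
      = (S.det)⁻¹ * ∫ v : Fin n → ℝ, Real.exp (-(1/2) * (v ⬝ᵥ v)) := by
    have h1 : ∫ u : Fin n → ℝ, Real.exp (-(1/2) * ((S *ᵥ u) ⬝ᵥ (S *ᵥ u)))
        = ∫ v, Real.exp (-(1/2) * (v ⬝ᵥ v)) ∂(Measure.map (Matrix.toLin' S) volume) := by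
      rw [integral_map (Matrix.toLin' S).continuous_of_finiteDimensional.aemeasurable
        hcont.aestronglyMeasurable]
      simp [Matrix.toLin'_apply]
    rw [h1, hmap, integral_smul_measure]
    rw [ENNReal.toReal_ofReal (abs_nonneg _), abs_of_nonneg (inv_nonneg.2 hdetS_nonneg)]
    simp [smul_eq_mul]
  rw [hchg]
  have hstd : ∫ v : Fin n → ℝ, Real.exp (-(1/2) * (v ⬝ᵥ v)) = Real.sqrt (2 * π) ^ n := by
    have h1 : ∀ v : Fin n → ℝ, Real.exp (-(1/2) * (v ⬝ᵥ v))
        = ∏ i, Real.exp (-(1/2) * (v i)^2) := by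
      intro v
      rw [← Real.exp_sum]
      congr 1
      simp [dotProduct, Finset.mul_sum, sq]
    simp_rw [h1]
    rw [integral_fintype_prod_volume_eq_pow (ι := Fin n) (fun t : ℝ => Real.exp (-(1/2) * t^2))]
    have := integral_gaussian (1/2 : ℝ)
    simp only [neg_mul] at this ⊢
    rw [this, Fintype.card_fin]
    congr 1
    rw [div_div_eq_mul_div, div_one, mul_comm]
  rw [hstd, hsqrtA]
  ring

/-- The constant in the duality lemma: for a Gaussian with precision
`P = [[A, B], [Bᵀ, D]]`, for every `y`,
`sup_x f(x,y) = (2π)^{-n₁/2} (det A)^{1/2} ∫ x, f(x,y)`. -/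
theorem gaussian_max_eq_const_mul_integral_explicit (n₁ n₂ : ℕ)
    (A : Matrix (Fin n₁) (Fin n₁) ℝ) (B : Matrix (Fin n₁) (Fin n₂) ℝ)
    (D : Matrix (Fin n₂) (Fin n₂) ℝ)
    (hP : (Matrix.fromBlocks A B Bᵀ D).PosDef)
    (m : Fin n₁ ⊕ Fin n₂ → ℝ) (y : Fin n₂ → ℝ) :
    (⨆ x : Fin n₁ → ℝ,
        Real.exp (-(1/2) * ((Sum.elim x y - m) ⬝ᵥ (Matrix.fromBlocks A B Bᵀ D) *ᵥ
          (Sum.elim x y - m)))) =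
      (2 * Real.pi) ^ (-(n₁ : ℝ) / 2) * Real.sqrt A.det *
        ∫ x : Fin n₁ → ℝ,
          Real.exp (-(1/2) * ((Sum.elim x y - m) ⬝ᵥ (Matrix.fromBlocks A B Bᵀ D) *ᵥ
            (Sum.elim x y - m))) := by
  have hA : A.PosDef := by
    refine Matrix.PosDef.of_dotProduct_mulVec_pos ?_ ?_
    · exact (Matrix.isHermitian_fromBlocks_iff.mp hP.isHermitian).1
    · intro x hx
      have hx' : Sum.elim x (0 : Fin n₂ → ℝ) ≠ 0 := by
        intro h
        apply hx
        funext i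
        exact congrFun h (Sum.inl i)
      have := hP.dotProduct_mulVec_pos hx'
      simpa [fromBlocks_mulVec, sumElim_dotProduct_sumElim] using this
  haveI : Invertible A := hA.isUnit.invertible
  set μ : Fin n₁ → ℝ := fun i => m (Sum.inl i) with hμ
  set v : Fin n₂ → ℝ := fun j => y j - m (Sum.inr j) with hv
  set x₀ : Fin n₁ → ℝ := μ - (A⁻¹ * B) *ᵥ v with hx₀
  set c : ℝ := v ⬝ᵥ (D - Bᵀ * A⁻¹ * B) *ᵥ v with hc
  have key : ∀ x : Fin n₁ → ℝ,
      (Sum.elim x y - m) ⬝ᵥ (Matrix.fromBlocks A B Bᵀ D) *ᵥ (Sum.elim x y - m)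
        = (x - x₀) ⬝ᵥ A *ᵥ (x - x₀) + c := by
    intro x
    have helim : Sum.elim x y - m = Sum.elim (x - μ) v := by
      funext i
      cases i <;> simp [hμ, hv]
    have hBT : Bᵀ = Bᴴ := (conjTranspose_eq_transpose_of_trivial B).symm
    have := Matrix.schur_complement_eq₁₁ (α := ℝ) B D (x - μ) v hA.isHermitian
    rw [helim, hBT]
    simp only [star_trivial] at this
    rw [dotProduct_mulVec, this]
    have hxx : x - μ + (A⁻¹ * B) *ᵥ v = x - x₀ := by
      rw [hx₀]; abel
    rw [hxx, hc, hBT]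
    rw [← dotProduct_mulVec, ← dotProduct_mulVec]
  -- the supremum equals exp(-(1/2)c)
  have hub : ∀ x : Fin n₁ → ℝ,
      Real.exp (-(1/2) * ((Sum.elim x y - m) ⬝ᵥ (Matrix.fromBlocks A B Bᵀ D) *ᵥ
        (Sum.elim x y - m))) ≤ Real.exp (-(1/2) * c) := by
    intro x
    rw [key x]
    apply Real.exp_le_exp.2
    have h0 : 0 ≤ (x - x₀) ⬝ᵥ A *ᵥ (x - x₀) := by
      have := hA.posSemidef.dotProduct_mulVec_nonneg (x - x₀)
      simpa using this
    nlinarith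
  have hsup : (⨆ x : Fin n₁ → ℝ,
      Real.exp (-(1/2) * ((Sum.elim x y - m) ⬝ᵥ (Matrix.fromBlocks A B Bᵀ D) *ᵥ
        (Sum.elim x y - m)))) = Real.exp (-(1/2) * c) := by
    apply le_antisymm
    · exact ciSup_le hub
    · have hbdd : BddAbove (Set.range fun x : Fin n₁ → ℝ =>
          Real.exp (-(1/2) * ((Sum.elim x y - m) ⬝ᵥ (Matrix.fromBlocks A B Bᵀ D) *ᵥ
            (Sum.elim x y - m)))) := by
        refine ⟨Real.exp (-(1/2) * c), ?_⟩
        rintro _ ⟨x, rfl⟩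
        exact hub x
      have hx₀val : Real.exp (-(1/2) * ((Sum.elim x₀ y - m) ⬝ᵥ
          (Matrix.fromBlocks A B Bᵀ D) *ᵥ (Sum.elim x₀ y - m))) = Real.exp (-(1/2) * c) := by
        rw [key x₀]
        simp
      calc Real.exp (-(1/2) * c)
          = _ := hx₀val.symm
        _ ≤ _ := le_ciSup hbdd x₀
  -- the integral
  have hint : (∫ x : Fin n₁ → ℝ,
      Real.exp (-(1/2) * ((Sum.elim x y - m) ⬝ᵥ (Matrix.fromBlocks A B Bᵀ D) *ᵥ
        (Sum.elim x y - m))))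
      = (Real.sqrt (2 * π) ^ n₁ / Real.sqrt A.det) * Real.exp (-(1/2) * c) := by
    have h1 : ∀ x : Fin n₁ → ℝ,
        Real.exp (-(1/2) * ((Sum.elim x y - m) ⬝ᵥ (Matrix.fromBlocks A B Bᵀ D) *ᵥ
          (Sum.elim x y - m)))
        = Real.exp (-(1/2) * ((x - x₀) ⬝ᵥ A *ᵥ (x - x₀))) * Real.exp (-(1/2) * c) := by
      intro x
      rw [key x, ← Real.exp_add]
      ring_nf
    simp_rw [h1]
    rw [integral_mul_const]
    congr 1
    rw [integral_sub_right_eq_self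
      (fun u : Fin n₁ → ℝ => Real.exp (-(1/2) * (u ⬝ᵥ A *ᵥ u))) x₀]
    exact gauss_aux hA
  rw [hsup, hint]
  have hpi : (0:ℝ) < 2 * π := by positivity
  have hsd : (0:ℝ) < Real.sqrt A.det := Real.sqrt_pos.2 hA.det_pos
  have hpow : Real.sqrt (2 * π) ^ n₁ = (2 * π) ^ ((n₁ : ℝ) / 2) := by
    rw [Real.sqrt_eq_rpow, ← Real.rpow_natCast ((2*π) ^ ((1:ℝ)/2)) n₁,
      ← Real.rpow_mul hpi.le]
    ring_nf
  have hcancel : (2 * π) ^ (-(n₁ : ℝ) / 2) * (2 * π) ^ ((n₁ : ℝ) / 2) = 1 := by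
    rw [← Real.rpow_add hpi, show -(n₁:ℝ) / 2 + (n₁:ℝ) / 2 = 0 by ring, Real.rpow_zero]
  rw [hpow]
  have : (2 * π) ^ (-(n₁:ℝ) / 2) * Real.sqrt A.det *
      ((2 * π) ^ ((n₁:ℝ) / 2) / Real.sqrt A.det * Real.exp (-(1/2) * c))
      = ((2 * π) ^ (-(n₁:ℝ) / 2) * (2 * π) ^ ((n₁:ℝ) / 2)) *
        (Real.sqrt A.det / Real.sqrt A.det) * Real.exp (-(1/2) * c) := by
    ring
  rw [this, hcancel, div_self hsd.ne']
  ring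
end

section
/- Let n₁, n₂ : ℕ, let P be a symmetric positive definite real matrix of size (n₁+n₂)×(n₁+n₂), let m = (m₁, m₂) ∈ ℝ^{n₁} × ℝ^{n₂}, and define f(x,y) = exp(−(1/2)·((x,y)−m)ᵀ P ((x,y)−m)). Then the function x ↦ ∫_{ℝ^{n₂}} f(x,y) dy and the function x ↦ sup_{y ∈ ℝ^{n₂}} f(x,y) each attain their supremum at a unique point of ℝ^{n₁}, and these two maximizers coincide and equal m₁ (the first block of the mean). In other words, for Gaussians the mode of the marginal coincides with the max-marginal maximizer. -/
open Matrix MeasureTheory Real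

lemma quad_lower_bound' {k : ℕ} {D : Matrix (Fin k) (Fin k) ℝ} (hD : D.PosDef) :
    ∃ c > 0, ∀ w : Fin k → ℝ, c * (w ⬝ᵥ w) ≤ w ⬝ᵥ D *ᵥ w := by
  have hcontPi : Continuous fun w : Fin k → ℝ => w ⬝ᵥ D *ᵥ w := by
    simp only [dotProduct, mulVec]
    fun_prop
  by_cases hk : Nonempty (Fin k)
  · haveI := hk
    set E := EuclideanSpace ℝ (Fin k)
    have hcont : Continuous fun w : E => (WithLp.equiv 2 _ w) ⬝ᵥ D *ᵥ (WithLp.equiv 2 _ w) :=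
      hcontPi.comp (PiLp.continuous_ofLp 2 _)
    have hsph : (Metric.sphere (0 : E) 1).Nonempty :=
      NormedSpace.sphere_nonempty.mpr (by norm_num)
    obtain ⟨w₀, hw₀mem, hw₀min⟩ :=
      (isCompact_sphere (0 : E) 1).exists_isMinOn hsph hcont.continuousOn
    have hw₀norm : ‖w₀‖ = 1 := by simpa using hw₀mem
    have hw₀ne : (WithLp.equiv 2 _ w₀ : Fin k → ℝ) ≠ 0 := by
      intro h
      have : w₀ = 0 := by
        ext i; exact congrFun h i
      rw [this] at hw₀norm; simp at hw₀norm
    set c := (WithLp.equiv 2 _ w₀) ⬝ᵥ D *ᵥ (WithLp.equiv 2 _ w₀) with hc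
    have hcpos : 0 < c := by
      have := hD.dotProduct_mulVec_pos hw₀ne
      rw [star_trivial] at this; exact this
    refine ⟨c, hcpos, fun w => ?_⟩
    by_cases hw : w = 0
    · simp [hw]
    · set wE : E := (WithLp.equiv 2 _).symm w
      have hwEnorm : 0 < ‖wE‖ := by
        apply norm_pos_iff.mpr
        intro h
        apply hw
        ext i
        exact congrFun (congrArg (WithLp.equiv 2 _) h) i
      set t : ℝ := ‖wE‖
      set v : E := t⁻¹ • wE with hv
      have hvmem : v ∈ Metric.sphere (0 : E) 1 := by
        simp [hv, norm_smul, abs_of_pos (inv_pos.mpr hwEnorm), t,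
          inv_mul_cancel₀ hwEnorm.ne']
      have hle := hw₀min hvmem
      -- φ v as dotProduct
      have hvp : (WithLp.equiv 2 _ v : Fin k → ℝ) = t⁻¹ • w := rfl
      have hwe : (WithLp.equiv 2 _ wE : Fin k → ℝ) = w := rfl
      have hquad : w ⬝ᵥ D *ᵥ w = t^2 * ((t⁻¹ • w) ⬝ᵥ D *ᵥ (t⁻¹ • w)) := by
        rw [smul_dotProduct, mulVec_smul, dotProduct_smul]
        field_simp
        simp only [smul_eq_mul, one_div]; linear_combination (-(w ⬝ᵥ D *ᵥ w) * (t * t⁻¹ + 1)) * mul_inv_cancel₀ hwEnorm.ne'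
      have hnorm2 : w ⬝ᵥ w = t^2 := by
        rw [show t = ‖wE‖ from rfl, EuclideanSpace.norm_eq,
          Real.sq_sqrt (by positivity)]
        show ∑ i, w i * w i = ∑ i, ‖w i‖^2
        simp [Real.norm_eq_abs, sq_abs, sq]
      have hfv : c ≤ (t⁻¹ • w) ⬝ᵥ D *ᵥ (t⁻¹ • w) := by
        exact hle
      calc c * (w ⬝ᵥ w) = t^2 * c := by rw [hnorm2]; ring
        _ ≤ t^2 * ((t⁻¹ • w) ⬝ᵥ D *ᵥ (t⁻¹ • w)) := by
            apply mul_le_mul_of_nonneg_left hfv (by positivity)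
        _ = w ⬝ᵥ D *ᵥ w := (hquad).symm
  · refine ⟨1, one_pos, fun w => ?_⟩
    have : w = 0 := funext fun i => absurd ⟨i⟩ hk
    simp [this]

lemma integrable_gauss' {k : ℕ} {D : Matrix (Fin k) (Fin k) ℝ} (hD : D.PosDef) :
    Integrable (fun w : Fin k → ℝ => Real.exp (-(1/2) * (w ⬝ᵥ D *ᵥ w))) := by
  obtain ⟨c, hc, hbound⟩ := quad_lower_bound' hD
  have h1 : Integrable (fun w : Fin k → ℝ => ∏ i, Real.exp (-(c/2) * (w i)^2)) :=
    Integrable.fintype_prod (f := fun (_ : Fin k) (x : ℝ) => Real.exp (-(c/2) * x^2))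
      (fun i => integrable_exp_neg_mul_sq (by positivity))
  have hcont : Continuous fun w : Fin k → ℝ => Real.exp (-(1/2) * (w ⬝ᵥ D *ᵥ w)) := by
    apply Real.continuous_exp.comp
    apply Continuous.mul continuous_const
    simp only [dotProduct, mulVec]
    fun_prop
  apply h1.mono' hcont.aestronglyMeasurable
  filter_upwards with w
  rw [Real.norm_eq_abs, abs_of_pos (Real.exp_pos _), ← Real.exp_sum]
  apply Real.exp_le_exp.mpr
  have := hbound w
  have hdw : (∑ i, -(c/2) * (w i)^2) = -(1/2) * (c * (w ⬝ᵥ w)) := by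
    simp [dotProduct, Finset.mul_sum, sq]
    exact Finset.sum_congr rfl fun i _ => by ring
  rw [hdw]
  nlinarith [hbound w]

/-- For a Gaussian `f(x,y) = exp(-(1/2)((x,y)-(m₁,m₂))ᵀ P ((x,y)-(m₁,m₂)))` with symmetric
positive definite `P`, both the marginal `x ↦ ∫ y, f(x,y)` and the max-marginal
`x ↦ ⨆ y, f(x,y)` attain their supremum at the unique point `m₁`. -/
theorem gaussian_marginal_mode_eq_max_marginal_mode (n₁ n₂ : ℕ)
    (P : Matrix (Fin n₁ ⊕ Fin n₂) (Fin n₁ ⊕ Fin n₂) ℝ) (hP : P.PosDef)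
    (m₁ : Fin n₁ → ℝ) (m₂ : Fin n₂ → ℝ) :
    let f : (Fin n₁ → ℝ) → (Fin n₂ → ℝ) → ℝ := fun x y =>
      Real.exp (-(1/2) * ((Sum.elim x y - Sum.elim m₁ m₂) ⬝ᵥ P *ᵥ
        (Sum.elim x y - Sum.elim m₁ m₂)))
    (∀ x : Fin n₁ → ℝ, x ≠ m₁ → (∫ y : Fin n₂ → ℝ, f x y) < ∫ y : Fin n₂ → ℝ, f m₁ y) ∧
    (∀ x : Fin n₁ → ℝ, x ≠ m₁ → (⨆ y : Fin n₂ → ℝ, f x y) < ⨆ y : Fin n₂ → ℝ, f m₁ y) := by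
  intro f
  set A := P.toBlocks₁₁ with hA
  set B := P.toBlocks₁₂ with hB
  set D := P.toBlocks₂₂ with hD'
  have hsymm : ∀ i j, P i j = P j i := by
    intro i j
    conv_lhs => rw [← hP.1]
    simp [conjTranspose_apply]
  have hPB : P = fromBlocks A B Bᴴ D := by
    have h21 : P.toBlocks₂₁ = Bᴴ := by
      ext i j
      simp [toBlocks₂₁, toBlocks₁₂, conjTranspose_apply, hB, hsymm]
    rw [← h21]
    exact (fromBlocks_toBlocks P).symm
  have helim : ∀ (x : Fin n₁ → ℝ) (y : Fin n₂ → ℝ),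
      Sum.elim x y - Sum.elim m₁ m₂ = Sum.elim (x - m₁) (y - m₂) := by
    intro x y; funext i; cases i <;> simp
  have hDpd : D.PosDef := by
    rw [posDef_iff_dotProduct_mulVec]
    constructor
    · exact (isHermitian_fromBlocks_iff.mp (by rw [← hPB]; exact hP.1)).2.2.2
    · intro y hy
      have hne : Sum.elim (0 : Fin n₁ → ℝ) y ≠ 0 := by
        intro h; apply hy; funext i
        simpa using congrFun h (Sum.inr i)
      have := hP.dotProduct_mulVec_pos hne
      rw [show (star (Sum.elim (0 : Fin n₁ → ℝ) y)) = Sum.elim (0 : Fin n₁ → ℝ) y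
          from star_trivial _] at this
      rw [hPB] at this
      simpa [fromBlocks_mulVec, sumElim_dotProduct_sumElim] using this
  haveI : Invertible D := hDpd.isUnit.invertible
  set S := A - B * D⁻¹ * Bᴴ with hS'
  have key : ∀ (u : Fin n₁ → ℝ) (w : Fin n₂ → ℝ),
      Sum.elim u w ⬝ᵥ P *ᵥ Sum.elim u w =
        ((D⁻¹ * Bᴴ) *ᵥ u + w) ⬝ᵥ D *ᵥ ((D⁻¹ * Bᴴ) *ᵥ u + w) + u ⬝ᵥ S *ᵥ u := by
    intro u w
    have h := schur_complement_eq₂₂ A B u w hDpd.1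
    rw [star_trivial, star_trivial, star_trivial] at h
    rw [hPB]
    rw [dotProduct_mulVec, dotProduct_mulVec, dotProduct_mulVec]
    exact h
  have hSpd : S.PosDef := by
    rw [posDef_iff_dotProduct_mulVec]
    constructor
    · exact (IsHermitian.fromBlocks₂₂ A B hDpd.1).mp (by rw [← hPB]; exact hP.1)
    · intro u hu
      have hne : Sum.elim u (-((D⁻¹ * Bᴴ) *ᵥ u)) ≠ 0 := by
        intro h; apply hu; funext i
        simpa using congrFun h (Sum.inl i)
      have := hP.dotProduct_mulVec_pos hne
      rw [show (star (Sum.elim u (-((D⁻¹ * Bᴴ) *ᵥ u)))) = _ from star_trivial _] at this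
      rw [key u (-((D⁻¹ * Bᴴ) *ᵥ u))] at this
      simpa [star_trivial] using this
  set g : (Fin n₂ → ℝ) → ℝ := fun w => Real.exp (-(1/2) * (w ⬝ᵥ D *ᵥ w)) with hg'
  have hf_eq : ∀ x y, f x y =
      Real.exp (-(1/2) * ((x - m₁) ⬝ᵥ S *ᵥ (x - m₁))) *
        g (y + ((D⁻¹ * Bᴴ) *ᵥ (x - m₁) - m₂)) := by
    intro x y
    have harg : (D⁻¹ * Bᴴ) *ᵥ (x - m₁) + (y - m₂) = y + ((D⁻¹ * Bᴴ) *ᵥ (x - m₁) - m₂) := by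
      ring
    simp only [f, hg', helim, key (x - m₁) (y - m₂), harg]
    rw [← Real.exp_add]
    ring_nf
  -- marginal formula
  have hint : ∀ x, (∫ y : Fin n₂ → ℝ, f x y) =
      Real.exp (-(1/2) * ((x - m₁) ⬝ᵥ S *ᵥ (x - m₁))) * ∫ w : Fin n₂ → ℝ, g w := by
    intro x
    simp_rw [hf_eq x]
    rw [integral_const_mul]
    congr 1
    exact integral_add_right_eq_self g _
  have hgint : Integrable g := integrable_gauss' hDpd
  have hgpos : 0 < ∫ w : Fin n₂ → ℝ, g w := integral_exp_pos hgint
  have hSq : ∀ x : Fin n₁ → ℝ, x ≠ m₁ → 0 < (x - m₁) ⬝ᵥ S *ᵥ (x - m₁) := by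
    intro x hx
    have := hSpd.dotProduct_mulVec_pos (sub_ne_zero.mpr hx)
    simpa [star_trivial] using this
  have hsup : ∀ x, (⨆ y : Fin n₂ → ℝ, f x y) =
      Real.exp (-(1/2) * ((x - m₁) ⬝ᵥ S *ᵥ (x - m₁))) := by
    intro x
    set c := Real.exp (-(1/2) * ((x - m₁) ⬝ᵥ S *ᵥ (x - m₁))) with hc
    have hub : ∀ y, f x y ≤ c := by
      intro y
      rw [hf_eq x y]
      have h1 : g (y + ((D⁻¹ * Bᴴ) *ᵥ (x - m₁) - m₂)) ≤ 1 := by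
        rw [hg']
        apply Real.exp_le_one_iff.mpr
        have h0 : (0:ℝ) ≤ (y + ((D⁻¹ * Bᴴ) *ᵥ (x - m₁) - m₂)) ⬝ᵥ
            D *ᵥ (y + ((D⁻¹ * Bᴴ) *ᵥ (x - m₁) - m₂)) := by
          have := hDpd.posSemidef.dotProduct_mulVec_nonneg (y + ((D⁻¹ * Bᴴ) *ᵥ (x - m₁) - m₂))
          simpa [star_trivial] using this
        nlinarith
      calc c * g _ ≤ c * 1 := by
            apply mul_le_mul_of_nonneg_left h1 (Real.exp_pos _).le
        _ = c := mul_one c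
    have hatt : f x (m₂ - (D⁻¹ * Bᴴ) *ᵥ (x - m₁)) = c := by
      rw [hf_eq]
      have : (m₂ - (D⁻¹ * Bᴴ) *ᵥ (x - m₁)) + ((D⁻¹ * Bᴴ) *ᵥ (x - m₁) - m₂) = 0 := by ring
      rw [this]
      simp only [hg', zero_dotProduct, mul_zero, Real.exp_zero, mul_one, hc]
    refine le_antisymm (ciSup_le hub) ?_
    rw [← hatt]
    exact le_ciSup ⟨c, by rintro z ⟨y, rfl⟩; exact hub y⟩ _
  constructor
  · intro x hx
    rw [hint x, hint m₁]
    simp only [sub_self, zero_dotProduct, mul_zero, Real.exp_zero, one_mul]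
    have h1 : Real.exp (-(1/2) * ((x - m₁) ⬝ᵥ S *ᵥ (x - m₁))) < 1 := by
      apply Real.exp_lt_one_iff.mpr
      nlinarith [hSq x hx]
    calc Real.exp (-(1/2) * ((x - m₁) ⬝ᵥ S *ᵥ (x - m₁))) * ∫ w : Fin n₂ → ℝ, g w
        < 1 * ∫ w : Fin n₂ → ℝ, g w := by
          exact mul_lt_mul_of_pos_right h1 hgpos
      _ = ∫ w : Fin n₂ → ℝ, g w := one_mul _
  · intro x hx
    rw [hsup x, hsup m₁]
    simp only [sub_self, zero_dotProduct, mul_zero, Real.exp_zero]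
    apply Real.exp_lt_one_iff.mpr
    nlinarith [hSq x hx]
end
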